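/- Let A ∈ ℝ^{n×n}, B ∈ ℝ^{n×p}, and let L ∈ ℝ^{N×N} be symmetric with all eigenvalues contained in the interval [λ₁, λ_N], where 0 < λ₁ ≤ λ_N. Set α = 2/(λ₁ + λ_N) and ν = (λ_N - λ₁)/(λ_N + λ₁). Suppose Φ ∈ ℝ^{n×n} is symmetric positive definite and F ∈ ℝ^{p×n} is such that for every real Δ with |Δ| ≤ ν, the matrix Φ - (AΦ + (1+Δ)·B F)·Φ⁻¹·(AΦ + (1+Δ)·B F)ᵀ is positive definite. Then the matrix I_N ⊗ A + α·L ⊗ (B·F·Φ⁻¹) is Schur stable. -/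

import Mathlib

open Matrix
open scoped Kronecker

noncomputable section

lemma mem_spectrum_iff_det {m : Type*} [Fintype m] [DecidableEq m] (M : Matrix m m ℂ) (μ : ℂ) :
    μ ∈ spectrum ℂ M ↔ (μ • (1 : Matrix m m ℂ) - M).det = 0 := by
  rw [spectrum.mem_iff, Matrix.isUnit_iff_isUnit_det, isUnit_iff_ne_zero, not_not,
    Algebra.algebraMap_eq_smul_one]

lemma re_quad {m : Type*} [Fintype m] (S : Matrix m m ℝ) (v : m → ℂ) :
    (dotProduct (star v) ((S.map Complex.ofReal) *ᵥ v)).re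
      = dotProduct (fun i => (v i).re) (S *ᵥ fun i => (v i).re)
        + dotProduct (fun i => (v i).im) (S *ᵥ fun i => (v i).im) := by
  simp only [dotProduct, mulVec, Matrix.map_apply, Pi.star_apply, dotProduct,
    Finset.mul_sum, Complex.re_sum, ← Finset.sum_add_distrib]
  refine Finset.sum_congr rfl fun i _ => ?_
  refine Finset.sum_congr rfl fun j _ => ?_
  simp only [RingHom.id_apply, RCLike.star_def, Complex.mul_re, Complex.mul_im, Complex.conj_re, Complex.conj_im,
    Complex.ofReal_re, Complex.ofReal_im]
  ring

lemma re_quad_pos {m : Type*} [Fintype m] {S : Matrix m m ℝ} (hS : S.PosDef) {v : m → ℂ}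
    (hv : v ≠ 0) : 0 < (dotProduct (star v) ((S.map Complex.ofReal) *ᵥ v)).re := by
  rw [re_quad]
  have key : ∀ x : m → ℝ, 0 ≤ dotProduct x (S *ᵥ x) := fun x => by
    simpa using hS.posSemidef.dotProduct_mulVec_nonneg x
  have key2 : ∀ x : m → ℝ, x ≠ 0 → 0 < dotProduct x (S *ᵥ x) := fun x hx => by
    simpa using hS.dotProduct_mulVec_pos hx
  by_cases ha : (fun i => (v i).re) = 0
  · have hb : (fun i => (v i).im) ≠ 0 := by
      intro hb
      apply hv; funext i
      have h1 := congrFun ha i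
      have h2 := congrFun hb i
      simp only [Pi.zero_apply] at h1 h2
      exact Complex.ext (by simpa using h1) (by simpa using h2)
    have t1 := key2 _ hb
    have t2 := key (fun i => (v i).re)
    linarith
  · have t1 := key2 _ ha
    have t2 := key (fun i => (v i).im)
    linarith

lemma stein {m : Type*} [Fintype m] [DecidableEq m] {K Φ : Matrix m m ℝ} (hΦ : Φ.PosDef)
    (h : (Φ - K * Φ * Kᵀ).PosDef) {μ : ℂ}
    (hμ : μ ∈ spectrum ℂ (K.map Complex.ofReal)) : ‖μ‖ < 1 := by
  rw [mem_spectrum_iff_det] at hμ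
  set W := Kᵀ.map Complex.ofReal with hW
  set Φc := Φ.map Complex.ofReal with hΦc
  have hKW : K.map Complex.ofReal = Wᵀ := by
    rw [hW, ← Matrix.transpose_map, Matrix.transpose_transpose]
  have hdet : (μ • (1 : Matrix m m ℂ) - W).det = 0 := by
    rw [← Matrix.det_transpose]
    have e : (μ • (1 : Matrix m m ℂ) - W)ᵀ = μ • (1 : Matrix m m ℂ) - K.map Complex.ofReal := by
      rw [Matrix.transpose_sub, Matrix.transpose_smul, Matrix.transpose_one, hKW]
    rw [e]; exact hμ
  obtain ⟨v, hv0, hv⟩ := (Matrix.exists_mulVec_eq_zero_iff).mpr hdet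
  have hWv : W *ᵥ v = μ • v := by
    rw [Matrix.sub_mulVec, sub_eq_zero] at hv
    rw [← hv, Matrix.smul_mulVec, Matrix.one_mulVec]
  have hstar : W *ᵥ (star v) = star (W *ᵥ v) := by
    funext i
    simp only [Matrix.mulVec, dotProduct, Pi.star_apply, star_sum, star_mul',
      Matrix.map_apply, Complex.star_def, Complex.conj_ofReal, hW]
  set q : ℂ := dotProduct (star v) (Φc *ᵥ v) with hqdef
  have hmap : (Φ - K * Φ * Kᵀ).map Complex.ofReal = Φc - (K.map Complex.ofReal) * Φc * W := by
    ext i j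
    simp only [Matrix.map_apply, Matrix.sub_apply, Matrix.mul_apply, hΦc, hW]
    push_cast
    rfl
  have hq : dotProduct (star v) (((Φ - K * Φ * Kᵀ).map Complex.ofReal) *ᵥ v)
      = q - ((starRingEnd ℂ) μ * μ) * q := by
    rw [hmap, Matrix.sub_mulVec, dotProduct_sub, ← hqdef]
    congr 1
    rw [← Matrix.mulVec_mulVec, ← Matrix.mulVec_mulVec, Matrix.dotProduct_mulVec, hKW,
      Matrix.vecMul_transpose, hstar, hWv, Matrix.mulVec_smul, star_smul, dotProduct_smul,
      smul_dotProduct]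
    simp only [smul_eq_mul, Complex.star_def, hqdef]
    ring
  have hpos := re_quad_pos h hv0
  have hqpos := re_quad_pos hΦ hv0
  rw [hq] at hpos
  rw [← hqdef] at hqpos
  have hre : (q - ((starRingEnd ℂ) μ * μ) * q).re = q.re - Complex.normSq μ * q.re := by
    have e : (starRingEnd ℂ) μ * μ = (Complex.normSq μ : ℂ) := by
      rw [mul_comm, Complex.mul_conj]
    rw [Complex.sub_re, e, Complex.re_ofReal_mul]
  rw [hre] at hpos
  have h1 : Complex.normSq μ < 1 := by nlinarith
  have h2 : ‖μ‖ ^ 2 < 1 := by rw [Complex.sq_norm]; exact h1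
  nlinarith [norm_nonneg μ]
lemma cmap_mul {a b c : Type*} [Fintype b] (M : Matrix a b ℝ) (N : Matrix b c ℝ) :
    (M * N).map Complex.ofReal = M.map Complex.ofReal * N.map Complex.ofReal := by
  ext i j
  simp [Matrix.mul_apply, Matrix.map_apply]

lemma cmap_add {a b : Type*} (M N : Matrix a b ℝ) :
    (M + N).map Complex.ofReal = M.map Complex.ofReal + N.map Complex.ofReal := by
  ext i j; simp

lemma cmap_one {a : Type*} [Fintype a] [DecidableEq a] :
    (1 : Matrix a a ℝ).map Complex.ofReal = 1 := by
  ext i j; simp [Matrix.one_apply, apply_ite Complex.ofReal]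

lemma cmap_kron {a b c d : Type*} (M : Matrix a b ℝ) (N : Matrix c d ℝ) :
    (M ⊗ₖ N).map Complex.ofReal = (M.map Complex.ofReal) ⊗ₖ (N.map Complex.ofReal) := by
  ext ⟨i, j⟩ ⟨i', j'⟩
  simp [Matrix.kroneckerMap_apply, Matrix.map_apply]

/-- A complex square matrix is Schur stable if every eigenvalue has modulus `< 1`. -/
def SchurStable {m : Type*} [Fintype m] [DecidableEq m] (M : Matrix m m ℂ) : Prop :=
  ∀ μ ∈ spectrum ℂ M, ‖μ‖ < 1

/-- A real square matrix is Schur stable if every complex eigenvalue has modulus `< 1`. -/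
def SchurStableR {m : Type*} [Fintype m] [DecidableEq m] (M : Matrix m m ℝ) : Prop :=
  SchurStable (M.map Complex.ofReal)

/-- robustness step inside the proof of Theorem 4: a quadratic Lyapunov
certificate `Φ` robust over the interval of uncertainties `|Δ| ≤ ν` yields Schur stability
of the Kronecker closed-loop matrix `I_N ⊗ A + αL ⊗ BFΦ⁻¹`. -/
theorem robust_certificate_kronecker_schur {n p N : ℕ}
    (A : Matrix (Fin n) (Fin n) ℝ) (B : Matrix (Fin n) (Fin p) ℝ)
    (L : Matrix (Fin N) (Fin N) ℝ) (hLsymm : L.IsSymm)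
    (lam1 lamN : ℝ) (hlam1 : 0 < lam1) (hlam : lam1 ≤ lamN)
    (hspec : ∀ μ ∈ spectrum ℝ L, lam1 ≤ μ ∧ μ ≤ lamN)
    (α ν : ℝ) (hα : α = 2 / (lam1 + lamN)) (hν : ν = (lamN - lam1) / (lamN + lam1))
    (Φ : Matrix (Fin n) (Fin n) ℝ) (hΦ : Φ.PosDef)
    (F : Matrix (Fin p) (Fin n) ℝ)
    (hrob : ∀ Δ : ℝ, |Δ| ≤ ν →
      (Φ - (A * Φ + (1 + Δ) • (B * F)) * Φ⁻¹ * (A * Φ + (1 + Δ) • (B * F))ᵀ).PosDef) :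
    SchurStableR ((1 : Matrix (Fin N) (Fin N) ℝ) ⊗ₖ A + (α • L) ⊗ₖ (B * F * Φ⁻¹)) := by
  have hL : L.IsHermitian := by
    rw [Matrix.IsHermitian, Matrix.conjTranspose_eq_transpose_of_trivial]; exact hLsymm
  set d : Fin N → ℝ := hL.eigenvalues with hd
  set U : Matrix (Fin N) (Fin N) ℝ := (hL.eigenvectorUnitary : Matrix (Fin N) (Fin N) ℝ) with hU
  have hUU : U * star U = 1 := (Matrix.mem_unitaryGroup_iff).mp (hL.eigenvectorUnitary).2
  have hLspec : U * Matrix.diagonal d * star U = L := by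
    conv_rhs => rw [hL.spectral_theorem]
    congr 2
  set G : Matrix (Fin n) (Fin n) ℝ := B * F * Φ⁻¹ with hG
  set Kr : Fin N → Matrix (Fin n) (Fin n) ℝ := fun i => A + (α * d i) • G with hKr
  set Mid : Matrix (Fin N × Fin n) (Fin N × Fin n) ℝ :=
    (1 : Matrix (Fin N) (Fin N) ℝ) ⊗ₖ A + (Matrix.diagonal fun i => α * d i) ⊗ₖ G with hMid
  have hsim : (1 : Matrix (Fin N) (Fin N) ℝ) ⊗ₖ A + (α • L) ⊗ₖ G
      = (U ⊗ₖ 1) * Mid * ((star U) ⊗ₖ 1) := by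
    rw [hMid, Matrix.mul_add, Matrix.add_mul]
    congr 1
    · simp [← Matrix.mul_kronecker_mul, hUU]
    · rw [← Matrix.mul_kronecker_mul, ← Matrix.mul_kronecker_mul]
      simp only [Matrix.one_mul, Matrix.mul_one]
      congr 1
      have hdiag : (Matrix.diagonal fun i => α * d i) = α • Matrix.diagonal d := by
        rw [← Matrix.diagonal_smul]
        congr 1
      rw [hdiag, mul_smul_comm, smul_mul_assoc, hLspec]
  unfold SchurStableR SchurStable
  intro μ hμ
  rw [mem_spectrum_iff_det] at hμ
  have hdetprod :
      (μ • (1 : Matrix (Fin N × Fin n) (Fin N × Fin n) ℂ)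
        - ((1 : Matrix (Fin N) (Fin N) ℝ) ⊗ₖ A + (α • L) ⊗ₖ G).map Complex.ofReal).det
      = ∏ i : Fin N, (μ • (1 : Matrix (Fin n) (Fin n) ℂ) - (Kr i).map Complex.ofReal).det := by
    set Vc := (U ⊗ₖ (1 : Matrix (Fin n) (Fin n) ℝ)).map Complex.ofReal with hVc
    set Wc := ((star U) ⊗ₖ (1 : Matrix (Fin n) (Fin n) ℝ)).map Complex.ofReal with hWc
    set Midc := Mid.map Complex.ofReal with hMidc
    have hVW : Vc * Wc = 1 := by
      rw [hVc, hWc, ← cmap_mul, ← Matrix.mul_kronecker_mul, hUU, Matrix.one_mul,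
        Matrix.one_kronecker_one, cmap_one]
    have h2 : μ • (1 : Matrix (Fin N × Fin n) (Fin N × Fin n) ℂ)
        - ((1 : Matrix (Fin N) (Fin N) ℝ) ⊗ₖ A + (α • L) ⊗ₖ G).map Complex.ofReal
        = Vc * (μ • (1 : Matrix (Fin N × Fin n) (Fin N × Fin n) ℂ) - Midc) * Wc := by
      rw [hsim, cmap_mul, cmap_mul, Matrix.mul_sub, Matrix.sub_mul]
      congr 1
      rw [mul_smul_comm, Matrix.mul_one, smul_mul_assoc, hVW]
    rw [h2, Matrix.det_mul, Matrix.det_mul]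
    have hdVW : Vc.det * Wc.det = 1 := by rw [← Matrix.det_mul, hVW, Matrix.det_one]
    have hre : Vc.det * (μ • (1 : Matrix (Fin N × Fin n) (Fin N × Fin n) ℂ) - Midc).det * Wc.det
        = (μ • (1 : Matrix (Fin N × Fin n) (Fin N × Fin n) ℂ) - Midc).det := by
      rw [mul_comm Vc.det, mul_assoc, hdVW, mul_one]
    rw [hre]
    have hbd : Midc = (Matrix.blockDiagonal fun i => (Kr i).map Complex.ofReal).submatrix
        (Equiv.prodComm (Fin N) (Fin n)) (Equiv.prodComm (Fin N) (Fin n)) := by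
      ext ⟨i, j⟩ ⟨i', j'⟩
      by_cases h : i = i'
      · subst h
        simp [hMidc, hMid, hKr, Matrix.kroneckerMap_apply, Matrix.blockDiagonal_apply,
          Matrix.one_apply, Matrix.diagonal_apply, Matrix.map_apply]
      · simp [hMidc, hMid, hKr, Matrix.kroneckerMap_apply, Matrix.blockDiagonal_apply,
          Matrix.one_apply, Matrix.diagonal_apply, Matrix.map_apply, h]
    rw [hbd]
    have hsub : μ • (1 : Matrix (Fin N × Fin n) (Fin N × Fin n) ℂ)
        - (Matrix.blockDiagonal fun i => (Kr i).map Complex.ofReal).submatrix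
          (Equiv.prodComm (Fin N) (Fin n)) (Equiv.prodComm (Fin N) (Fin n))
        = ((μ • (1 : Matrix (Fin n × Fin N) (Fin n × Fin N) ℂ)
            - Matrix.blockDiagonal fun i => (Kr i).map Complex.ofReal)).submatrix
          (Equiv.prodComm (Fin N) (Fin n)) (Equiv.prodComm (Fin N) (Fin n)) := by
      ext ⟨a, b⟩ ⟨c, e⟩
      by_cases h1 : a = c <;> by_cases h2 : b = e <;>
        simp [h1, h2, Matrix.one_apply, Prod.ext_iff]
    rw [hsub, Matrix.det_submatrix_equiv_self, ← Matrix.blockDiagonal_one,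
      ← Matrix.blockDiagonal_smul, ← Matrix.blockDiagonal_sub, Matrix.det_blockDiagonal]
    exact Finset.prod_congr rfl fun k _ => by simp
  rw [hdetprod, Finset.prod_eq_zero_iff] at hμ
  obtain ⟨i, -, hdet⟩ := hμ
  have hdi := hspec (d i) (hL.eigenvalues_mem_spectrum_real i)
  have hs : 0 < lam1 + lamN := by linarith
  have hΔ : |α * d i - 1| ≤ ν := by
    have e1 : α * d i - 1 = (2 * d i - (lam1 + lamN)) / (lam1 + lamN) := by
      rw [hα]; field_simp
    rw [e1, hν, abs_div, abs_of_pos hs, add_comm lamN lam1, div_le_div_iff_of_pos_right hs, abs_le]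
    constructor <;> linarith [hdi.1, hdi.2]
  have hΦdet : IsUnit Φ.det := isUnit_iff_ne_zero.mpr (ne_of_gt hΦ.det_pos)
  have hΦsymm : Φᵀ = Φ := by
    have h0 := hΦ.isHermitian
    rwa [Matrix.IsHermitian, Matrix.conjTranspose_eq_transpose_of_trivial] at h0
  have hKΦ : A * Φ + (1 + (α * d i - 1)) • (B * F) = Kr i * Φ := by
    have hc : 1 + (α * d i - 1) = α * d i := by ring
    rw [hc, hKr]
    dsimp only
    rw [Matrix.add_mul, smul_mul_assoc, hG, Matrix.mul_assoc (B * F) Φ⁻¹ Φ,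
      Matrix.nonsing_inv_mul Φ hΦdet, Matrix.mul_one]
  have hpd : (Φ - Kr i * Φ * (Kr i)ᵀ).PosDef := by
    have h0 := hrob (α * d i - 1) hΔ
    have e2 : (A * Φ + (1 + (α * d i - 1)) • (B * F)) * Φ⁻¹
          * (A * Φ + (1 + (α * d i - 1)) • (B * F))ᵀ
        = Kr i * Φ * (Kr i)ᵀ := by
      rw [hKΦ, Matrix.transpose_mul, hΦsymm, Matrix.mul_assoc (Kr i) Φ Φ⁻¹,
        Matrix.mul_nonsing_inv Φ hΦdet, Matrix.mul_one, ← Matrix.mul_assoc]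
    rwa [e2] at h0
  exact stein hΦ hpd (by rw [mem_spectrum_iff_det]; exact hdet)
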